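/- arXiv:2009.08571 — 2 statements merged into one kernel-verified Lean document; each statement's English description precedes it below -/
import Mathlib

section
/- Let $\mathcal{O}$ be the ring of integers of a nonarchimedean local field, $\mathfrak{p}$ its maximal ideal, $n \geq 2$, and $m \geq 0$. Let $K_{n-1,1} = \{\begin{pmatrix} a & b \\ 0 & 1 \end{pmatrix} : a \in \mathrm{GL}_{n-1}(\mathcal{O}), b \in \mathcal{O}^{n-1}\}$, let $K(\mathfrak{p}^m) = \{k \in \mathrm{GL}_n(\mathcal{O}) : k \equiv 1_n \bmod \mathfrak{p}^m\}$, and let $K_1(\mathfrak{p}^m) = \{\begin{pmatrix} a & b \\ c & d \end{pmatrix} \in \mathrm{GL}_n(\mathcal{O}) : c \equiv 0, d \equiv 1 \bmod \mathfrak{p}^m\}$. Then $K_{n-1,1} \cdot K(\mathfrak{p}^m) = K_1(\mathfrak{p}^m)$ as subsets of $\mathrm{GL}_n(\mathcal{O})$. -/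
open Pointwise

/-- `K_{n-1,1} ⬝ K(𝔭^m) = K₁(𝔭^m)` inside `GL_n(𝒪)`: the set of matrices whose last row
is exactly `e_n`, multiplied by the principal congruence subgroup of level `m`, equals the
set of matrices whose last row is congruent to `e_n` mod `𝔭^m`. -/
theorem stmt4 (𝒪 : Type*) [CommRing 𝒪] [IsDomain 𝒪] [IsDiscreteValuationRing 𝒪]
    (n m : ℕ) (hn : 2 ≤ n) :
    ({k : GL (Fin n) 𝒪 | ∀ j : Fin n,
        (k : Matrix (Fin n) (Fin n) 𝒪) (⟨n - 1, by omega⟩ : Fin n) j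
          = if j = (⟨n - 1, by omega⟩ : Fin n) then 1 else 0} *
      {k : GL (Fin n) 𝒪 | ∀ i j : Fin n,
        (k : Matrix (Fin n) (Fin n) 𝒪) i j - (1 : Matrix (Fin n) (Fin n) 𝒪) i j
          ∈ IsLocalRing.maximalIdeal 𝒪 ^ m}) =
    {k : GL (Fin n) 𝒪 |
      (∀ j : Fin n, j ≠ (⟨n - 1, by omega⟩ : Fin n) →
        (k : Matrix (Fin n) (Fin n) 𝒪) (⟨n - 1, by omega⟩ : Fin n) j
          ∈ IsLocalRing.maximalIdeal 𝒪 ^ m) ∧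
      (k : Matrix (Fin n) (Fin n) 𝒪) (⟨n - 1, by omega⟩ : Fin n) (⟨n - 1, by omega⟩ : Fin n) - 1
        ∈ IsLocalRing.maximalIdeal 𝒪 ^ m} := by
  set l : Fin n := ⟨n - 1, by omega⟩ with hldef
  ext g
  simp only [Set.mem_setOf_eq, Set.mem_mul]
  constructor
  · rintro ⟨a, ha, b, hb, rfl⟩
    have hrow : ∀ j, ((a * b : GL (Fin n) 𝒪) : Matrix (Fin n) (Fin n) 𝒪) l j
        = (b : Matrix (Fin n) (Fin n) 𝒪) l j := by
      intro j
      have h1 : ((a * b : GL (Fin n) 𝒪) : Matrix (Fin n) (Fin n) 𝒪) l j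
          = ∑ t, (a : Matrix (Fin n) (Fin n) 𝒪) l t * (b : Matrix (Fin n) (Fin n) 𝒪) t j := by
        rw [Units.val_mul, Matrix.mul_apply]
      rw [h1]
      calc ∑ t, (a : Matrix (Fin n) (Fin n) 𝒪) l t * (b : Matrix (Fin n) (Fin n) 𝒪) t j
          = ∑ t, (if t = l then (b : Matrix (Fin n) (Fin n) 𝒪) t j else 0) := by
            refine Finset.sum_congr rfl fun t _ => ?_
            rw [ha t]
            by_cases ht : t = l <;> simp [ht]
        _ = (b : Matrix (Fin n) (Fin n) 𝒪) l j := by simp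
    refine ⟨fun j hj => ?_, ?_⟩
    · rw [hrow j]
      simpa [Matrix.one_apply_ne (Ne.symm hj)] using hb l j
    · rw [hrow l]
      simpa [Matrix.one_apply_eq] using hb l l
  · rintro ⟨h1, h2⟩
    by_cases hm : m = 0
    · subst hm
      refine ⟨1, fun j => ?_, g, fun i j => ?_, one_mul g⟩
      · by_cases hj : j = l
        · subst hj; simp
        · have hlj : ¬ (l = j) := fun h => hj h.symm
          simp [hj, hlj, Matrix.one_apply]
      · simp
    · set G : Matrix (Fin n) (Fin n) 𝒪 := (g : Matrix (Fin n) (Fin n) 𝒪) with hG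
      have hunit : IsUnit (G l l) := by
        by_contra hni
        have hmem : G l l ∈ IsLocalRing.maximalIdeal 𝒪 := hni
        have h2' : G l l - 1 ∈ IsLocalRing.maximalIdeal 𝒪 :=
          Ideal.pow_le_self hm h2
        have hone : (1 : 𝒪) ∈ IsLocalRing.maximalIdeal 𝒪 := by
          have := sub_mem hmem h2'
          simpa using this
        exact (IsLocalRing.maximalIdeal.isMaximal 𝒪).ne_top (Ideal.eq_top_of_isUnit_mem _ hone isUnit_one)
      obtain ⟨u, hu⟩ := hunit
      set v : 𝒪 := ((u⁻¹ : 𝒪ˣ) : 𝒪) with hv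
      have huv : G l l * v = 1 := by rw [← hu, hv]; exact u.mul_inv
      have hvu : v * G l l = 1 := by rw [← hu, hv]; exact u.inv_mul
      set k : Matrix (Fin n) (Fin n) 𝒪 := (1 : Matrix (Fin n) (Fin n) 𝒪).updateRow l (G l)
        with hk
      set kinv : Matrix (Fin n) (Fin n) 𝒪 :=
        (1 : Matrix (Fin n) (Fin n) 𝒪).updateRow l
          (fun j => if j = l then v else -(G l j * v)) with hki
      -- generic fact: rows ≠ l of `updateRow 1 l r` act like the identity
      have hid : ∀ (M : Matrix (Fin n) (Fin n) 𝒪) (r : Fin n → 𝒪) (i j : Fin n), i ≠ l →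
          ∑ t, ((1 : Matrix (Fin n) (Fin n) 𝒪).updateRow l r) i t * M t j = M i j := by
        intro M r i j hi
        calc ∑ t, ((1 : Matrix (Fin n) (Fin n) 𝒪).updateRow l r) i t * M t j
            = ∑ t, (if i = t then 1 else 0) * M t j := by
              refine Finset.sum_congr rfl fun t _ => ?_
              rw [Matrix.updateRow_apply, if_neg hi, Matrix.one_apply]
          _ = M i j := by simp
      -- the key row-l computation (used both for `k * kinv = 1` and for `g * K⁻¹`)
      have hrowl : ∀ j, ∑ t, G l t * kinv t j = (1 : Matrix (Fin n) (Fin n) 𝒪) l j := by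
        intro j
        by_cases hj : j = l
        · subst hj
          calc ∑ t, G l t * kinv t l
              = ∑ t, (if t = l then G l l * v else 0) := by
                refine Finset.sum_congr rfl fun t _ => ?_
                rw [hki, Matrix.updateRow_apply]
                by_cases ht : t = l <;> simp [ht, Matrix.one_apply]
            _ = (1 : Matrix (Fin n) (Fin n) 𝒪) l l := by
                simp [huv, Matrix.one_apply]
        · have hlj : ¬ (l = j) := fun h => hj h.symm
          calc ∑ t, G l t * kinv t j
              = ∑ t, ((if t = l then -(G l j * (G l l * v)) else 0)
                  + (if t = j then G l j else 0)) := by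
                refine Finset.sum_congr rfl fun t _ => ?_
                rw [hki, Matrix.updateRow_apply]
                by_cases ht : t = l
                · subst ht
                  simp [hj, hlj]
                  ring
                · by_cases htj : t = j
                  · subst htj
                    simp [ht, Matrix.one_apply]
                  · simp [ht, htj, Matrix.one_apply, Ne.symm]
            _ = (1 : Matrix (Fin n) (Fin n) 𝒪) l j := by
                rw [Finset.sum_add_distrib]
                simp [huv, Matrix.one_apply, hlj]
      have hkk : k * kinv = 1 := by
        ext i j
        rw [Matrix.mul_apply]
        by_cases hi : i = l
        · subst hi
          calc ∑ t, k l t * kinv t j = ∑ t, G l t * kinv t j := by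
                refine Finset.sum_congr rfl fun t _ => ?_
                rw [hk, Matrix.updateRow_self]
            _ = (1 : Matrix (Fin n) (Fin n) 𝒪) l j := hrowl j
        · rw [hk, hid kinv _ i j hi, hki, Matrix.updateRow_apply, if_neg hi]
      have hkik : kinv * k = 1 := by
        ext i j
        rw [Matrix.mul_apply]
        by_cases hi : i = l
        · subst hi
          by_cases hj : j = l
          · subst hj
            calc ∑ t, kinv l t * k t l
                = ∑ t, (if t = l then v * G l l else 0) := by
                  refine Finset.sum_congr rfl fun t _ => ?_
                  rw [hki, hk, Matrix.updateRow_apply, Matrix.updateRow_apply]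
                  by_cases ht : t = l <;> simp [ht, Matrix.one_apply]
              _ = (1 : Matrix (Fin n) (Fin n) 𝒪) l l := by
                  simp [hvu, Matrix.one_apply]
          · have hlj : ¬ (l = j) := fun h => hj h.symm
            calc ∑ t, kinv l t * k t j
                = ∑ t, ((if t = l then v * G l j else 0)
                    + (if t = j then -(G l j * v) else 0)) := by
                  refine Finset.sum_congr rfl fun t _ => ?_
                  rw [hki, hk, Matrix.updateRow_apply, Matrix.updateRow_apply]
                  by_cases ht : t = l
                  · subst ht
                    simp [hj, hlj]
                  · by_cases htj : t = j
                    · subst htj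
                      simp [ht, Matrix.one_apply]
                    · simp [ht, htj, Matrix.one_apply]
              _ = (1 : Matrix (Fin n) (Fin n) 𝒪) l j := by
                  rw [Finset.sum_add_distrib]
                  simp [Matrix.one_apply, hlj]
                  ring
        · rw [hki, hid k _ i j hi, hk, Matrix.updateRow_apply, if_neg hi]
      set K : GL (Fin n) 𝒪 := ⟨k, kinv, hkk, hkik⟩ with hK
      have hKval : (K : Matrix (Fin n) (Fin n) 𝒪) = k := rfl
      have hKinv : ((K⁻¹ : GL (Fin n) 𝒪) : Matrix (Fin n) (Fin n) 𝒪) = kinv := rfl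
      refine ⟨g * K⁻¹, fun j => ?_, K, fun i j => ?_, inv_mul_cancel_right g K⟩
      · have : ((g * K⁻¹ : GL (Fin n) 𝒪) : Matrix (Fin n) (Fin n) 𝒪) l j
            = ∑ t, G l t * kinv t j := by
          rw [Units.val_mul, hKinv, Matrix.mul_apply]
        rw [this, hrowl j, Matrix.one_apply]
        by_cases hj : j = l
        · subst hj; simp
        · have hlj : ¬ (l = j) := fun h => hj h.symm
          rw [if_neg hlj, if_neg hj]
      · rw [hKval]
        by_cases hi : i = l
        · subst hi
          rw [hk, Matrix.updateRow_self]
          by_cases hj : j = l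
          · subst hj
            simpa [Matrix.one_apply] using h2
          · have hlj : ¬ (l = j) := fun h => hj h.symm
            simpa [Matrix.one_apply, hlj] using h1 j hj
        · rw [hk, Matrix.updateRow_apply, if_neg hi, sub_self]
          exact zero_mem _
end

section
/- Let $\mathcal{O}$ be the ring of integers of a nonarchimedean local field with residue field $\mathbb{F}_q$, and let $n \geq 2$. Suppose $a \in \mathrm{Mat}_{(n-1)\times(n-1)}(\mathcal{O})$ and $c \in \mathrm{Mat}_{1\times(n-1)}(\mathcal{O})$ are such that the $n \times n$ matrix with top-left block $a$ and bottom-left block $c$ extends to an element of $\mathrm{GL}_n(\mathcal{O})$, and $c$ has some entry in $\mathcal{O}^{\times}$. Then there exists $\beta \in \mathrm{Mat}_{(n-1)\times 1}(\mathcal{O})$ such that $\det(a - \beta c) \in \mathcal{O}^{\times}$. -/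
/-- Over a field: if the only vector killed by both `A` and the row vector `C` is zero,
then some `β` makes `A - β ⊗ C` nonsingular. -/
lemma chang_field_lemma {K : Type*} [Field K] {m : ℕ}
    (A : Matrix (Fin m) (Fin m) K) (C : Fin m → K)
    (h : ∀ x : Fin m → K, A.mulVec x = 0 → dotProduct C x = 0 → x = 0) :
    ∃ β : Fin m → K, (A - Matrix.of fun i j => β i * C j).det ≠ 0 := by
  by_cases hA : Function.Injective A.mulVec
  · refine ⟨0, ?_⟩
    have : (A - Matrix.of fun i j => (0 : Fin m → K) i * C j) = A := by
      ext i j; simp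
    rw [this, Ne, ← Matrix.exists_mulVec_eq_zero_iff]
    rintro ⟨v, hv0, hv⟩
    exact hv0 (hA (by simpa using hv))
  · have hsurj : ¬ Function.Surjective A.mulVecLin := by
      rw [← LinearMap.injective_iff_surjective]
      exact hA
    simp only [Function.Surjective, not_forall] at hsurj
    obtain ⟨β, hβ'⟩ := hsurj
    have hβ : ∀ y, A.mulVecLin y ≠ β := by push_neg at hβ'; exact hβ'
    refine ⟨β, ?_⟩
    rw [Ne, ← Matrix.exists_mulVec_eq_zero_iff]
    rintro ⟨y, hy0, hy⟩
    have hprod : (Matrix.of fun i j => β i * C j).mulVec y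
        = (dotProduct C y) • β := by
      funext i
      simp only [Matrix.mulVec, dotProduct, Matrix.of_apply, Pi.smul_apply,
        smul_eq_mul, Finset.mul_sum]
      rw [Finset.sum_mul]
      exact Finset.sum_congr rfl fun x _ => by ring
    rw [Matrix.sub_mulVec, hprod, sub_eq_zero] at hy
    by_cases hCy : dotProduct C y = 0
    · exact hy0 (h y (by rw [hy, hCy, zero_smul]) hCy)
    · apply hβ ((dotProduct C y)⁻¹ • y)
      
      rw [map_smul, Matrix.mulVecLin_apply, hy, smul_smul, inv_mul_cancel₀ hCy, one_smul]

/-- Chang's lemma: let `𝒪` be a complete discrete valuation ring with finite residue field,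
`n ≥ 2`, and suppose the blocks `a` (size `(n-1)×(n-1)`) and `c` (size `1×(n-1)`) extend to
an invertible matrix `(a b; c d)` over `𝒪`, with some entry of `c` a unit. Then there is
`β ∈ 𝒪^{n-1}` with `det(a - βc) ∈ 𝒪ˣ`. -/
theorem stmt7 (𝒪 : Type*) [CommRing 𝒪] [IsDomain 𝒪] [IsDiscreteValuationRing 𝒪]
    [IsAdicComplete (IsLocalRing.maximalIdeal 𝒪) 𝒪]
    (hfin : Finite (𝒪 ⧸ IsLocalRing.maximalIdeal 𝒪))
    (n : ℕ) (hn : 2 ≤ n)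
    (a : Matrix (Fin (n - 1)) (Fin (n - 1)) 𝒪)
    (c : Matrix (Fin 1) (Fin (n - 1)) 𝒪)
    (hext : ∃ (b : Matrix (Fin (n - 1)) (Fin 1) 𝒪) (d : Matrix (Fin 1) (Fin 1) 𝒪),
      IsUnit (Matrix.fromBlocks a b c d))
    (hc : ∃ j : Fin (n - 1), IsUnit (c 0 j)) :
    ∃ β : Matrix (Fin (n - 1)) (Fin 1) 𝒪, IsUnit (a - β * c).det := by
  classical
  obtain ⟨b, d, hM⟩ := hext
  set K := 𝒪 ⧸ IsLocalRing.maximalIdeal 𝒪 with hK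
  letI : Field K := Ideal.Quotient.field _
  set φ : 𝒪 →+* K := Ideal.Quotient.mk (IsLocalRing.maximalIdeal 𝒪) with hφ
  -- the reduced big matrix is invertible
  have hM' : IsUnit ((Matrix.fromBlocks a b c d).map φ) := by
    have := hM.map φ.mapMatrix
    rwa [RingHom.mapMatrix_apply] at this
  have hdet : ((Matrix.fromBlocks a b c d).map φ).det ≠ 0 :=
    ((Matrix.isUnit_iff_isUnit_det _).mp hM').ne_zero
  -- key injectivity hypothesis over the residue field
  have hinj : ∀ x : Fin (n - 1) → K, (a.map φ).mulVec x = 0 →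
      dotProduct (fun j => φ (c 0 j)) x = 0 → x = 0 := by
    intro x hx hcx
    have hz : ((Matrix.fromBlocks a b c d).map φ).mulVec (Sum.elim x 0) = 0 := by
      rw [Matrix.fromBlocks_map, Matrix.fromBlocks_mulVec]
      have h1 : (c.map φ).mulVec x = 0 := by
        funext i
        have : i = 0 := Subsingleton.elim _ _
        subst this
        simpa [Matrix.mulVec, dotProduct, Matrix.map] using hcx
      simp [hx, h1]
    have : Sum.elim x (0 : Fin 1 → K) = 0 := by
      by_contra hne
      exact hdet (Matrix.exists_mulVec_eq_zero_iff.mp ⟨_, hne, hz⟩)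
    funext i
    exact congrFun this (Sum.inl i)
  obtain ⟨βq, hβq⟩ := chang_field_lemma (a.map φ) (fun j => φ (c 0 j)) hinj
  -- lift βq
  choose β hβ using fun i => Ideal.Quotient.mk_surjective (βq i)
  refine ⟨Matrix.of fun i (_ : Fin 1) => β i, ?_⟩
  have hmap : ((a - (Matrix.of fun i (_ : Fin 1) => β i) * c).map φ)
      = a.map φ - Matrix.of fun i j => βq i * φ (c 0 j) := by
    ext i j
    simp [Matrix.map, Matrix.mul_apply, Fin.sum_univ_one, hβ, hφ]
  have hφdet : φ ((a - (Matrix.of fun i (_ : Fin 1) => β i) * c).det) ≠ 0 := by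
    rw [RingHom.map_det, RingHom.mapMatrix_apply, hmap]
    exact hβq
  by_contra hu
  apply hφdet
  rw [hφ, Ideal.Quotient.eq_zero_iff_mem]
  exact (IsLocalRing.mem_maximalIdeal _).mpr (mem_nonunits_iff.mpr hu)
end
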